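/- Let 1 ≤ p ≤ k − 1 and d, e ≥ 2 be integers. Let f : ℂ^k → ℂ^k be a bijective polynomial map whose inverse g is also polynomial. Write f = (f', f'') with f' = (f₁, …, f_p) and f'' = (f_{p+1}, …, f_k), g = (g', g'') similarly, and write points of ℂ^k as z = (z', z'') ∈ ℂ^p × ℂ^{k−p}. Assume: each f_j has degree at most d, and every common zero of the degree-d homogeneous parts of f₁, …, f_p lies in {z' = 0}; each g_j has degree at most e, and every common zero of the degree-e homogeneous parts of g_{p+1}, …, g_k lies in {z'' = 0}. Then there exists R₀ > 0 such that for every R ≥ R₀, setting D := B_p^R × B_{k−p}^R and U := {z ∈ D : f(z) ∈ D}, one has U ⊆ B_p^{R/2} × B_{k−p}^R and f(U) ⊆ B_p^R × B_{k−p}^{R/2}; in particular, if U is nonempty, the restriction f : U → f(U) is an invertible horizontal-like map on D. -/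

import Mathlib

open MvPolynomial

/-- An invertible horizontal-like map on `D = M × N`: a biholomorphism `f : U → V` between
nonempty open subsets of `D` (encoded as an injective holomorphic map with `f '' U = V`), whose
graph is closed in `D × D`, and such that `U ⊆ M₀ × N` and `V ⊆ M × N₀` for some open sets
`M₀ ⋐ M`, `N₀ ⋐ N`. -/
def InvHorizLike {p q : ℕ} (M : Set (EuclideanSpace ℂ (Fin p))) (N : Set (EuclideanSpace ℂ (Fin q)))
    (f : EuclideanSpace ℂ (Fin p) × EuclideanSpace ℂ (Fin q) →
      EuclideanSpace ℂ (Fin p) × EuclideanSpace ℂ (Fin q))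
    (U V : Set (EuclideanSpace ℂ (Fin p) × EuclideanSpace ℂ (Fin q))) : Prop :=
  IsOpen U ∧ IsOpen V ∧ U.Nonempty ∧ V.Nonempty ∧ U ⊆ M ×ˢ N ∧ V ⊆ M ×ˢ N ∧
  DifferentiableOn ℂ f U ∧ Set.InjOn f U ∧ f '' U = V ∧
  closure ((fun z => (z, f z)) '' U) ∩ ((M ×ˢ N) ×ˢ (M ×ˢ N)) ⊆ (fun z => (z, f z)) '' U ∧
  ∃ M₀ N₀, IsOpen M₀ ∧ IsOpen N₀ ∧ IsCompact (closure M₀) ∧ closure M₀ ⊆ M ∧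
    IsCompact (closure N₀) ∧ closure N₀ ⊆ N ∧ U ⊆ M₀ ×ˢ N ∧ V ⊆ M ×ˢ N₀

/-- Identification of `ℂ^p × ℂ^{k−p}` (as Euclidean spaces) with functions on
`Fin p ⊕ Fin (k−p)`. -/
noncomputable def ofV {p q : ℕ} (z : EuclideanSpace ℂ (Fin p) × EuclideanSpace ℂ (Fin q)) :
    (Fin p ⊕ Fin q) → ℂ :=
  Sum.elim (WithLp.equiv 2 ((i : Fin p) → ℂ) z.1) (WithLp.equiv 2 ((i : Fin q) → ℂ) z.2)

/-- Inverse identification. -/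
noncomputable def toV {p q : ℕ} (z : (Fin p ⊕ Fin q) → ℂ) :
    EuclideanSpace ℂ (Fin p) × EuclideanSpace ℂ (Fin q) :=
  ((WithLp.equiv 2 ((i : Fin p) → ℂ)).symm fun i => z (Sum.inl i),
    (WithLp.equiv 2 ((i : Fin q) → ℂ)).symm fun i => z (Sum.inr i))

/-- The polynomial map `ℂ^p × ℂ^{k−p} → ℂ^p × ℂ^{k−p}` defined by a family of polynomials. -/
noncomputable def polyMap {p q : ℕ} (P : (Fin p ⊕ Fin q) → MvPolynomial (Fin p ⊕ Fin q) ℂ)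
    (z : EuclideanSpace ℂ (Fin p) × EuclideanSpace ℂ (Fin q)) :
    EuclideanSpace ℂ (Fin p) × EuclideanSpace ℂ (Fin q) :=
  toV fun j => eval (ofV z) (P j)

section aux

lemma eval_smul_of_isHomogeneous {σ : Type*} (φ : MvPolynomial σ ℂ) {n : ℕ}
    (h : φ.IsHomogeneous n) (c : ℂ) (z : σ → ℂ) :
    eval (c • z) φ = c ^ n * eval z φ := by
  rw [eval_eq, eval_eq, Finset.mul_sum]
  apply Finset.sum_congr rfl
  intro m hm
  have hdeg : ∑ i ∈ m.support, m i = n := by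
    have := h (mem_support_iff.mp hm)
    rw [← this]
    show Finsupp.degree m = _
    rw [Finsupp.degree_eq_weight_one]; rfl
  calc φ.coeff m * ∏ i ∈ m.support, (c • z) i ^ m i
      = φ.coeff m * ∏ i ∈ m.support, (c ^ m i * z i ^ m i) := by
        simp [mul_pow]
    _ = c ^ n * (φ.coeff m * ∏ i ∈ m.support, z i ^ m i) := by
        rw [Finset.prod_mul_distrib, Finset.prod_pow_eq_pow_sum, hdeg]; ring

lemma norm_eval_le {σ : Type*} [Fintype σ] (φ : MvPolynomial σ ℂ) (z : σ → ℂ)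
    (M : ℝ) (hM : 1 ≤ M) (hz : ∀ i, ‖z i‖ ≤ M) {D : ℕ} (hD : φ.totalDegree ≤ D) :
    ‖eval z φ‖ ≤ (∑ m ∈ φ.support, ‖φ.coeff m‖) * M ^ D := by
  rw [eval_eq, Finset.sum_mul]
  refine (norm_sum_le _ _).trans (Finset.sum_le_sum fun m hm => ?_)
  rw [norm_mul]
  have h1 : ‖∏ i ∈ m.support, z i ^ m i‖ ≤ M ^ D := by
    rw [norm_prod]
    calc ∏ i ∈ m.support, ‖z i ^ m i‖ ≤ ∏ i ∈ m.support, M ^ m i := by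
          refine Finset.prod_le_prod (fun i _ => norm_nonneg _) fun i _ => ?_
          rw [norm_pow]
          exact pow_le_pow_left₀ (norm_nonneg _) (hz i) _
      _ = M ^ (∑ i ∈ m.support, m i) := Finset.prod_pow_eq_pow_sum _ _ _
      _ ≤ M ^ D := by
          refine pow_le_pow_right₀ hM ?_
          exact (MvPolynomial.le_totalDegree hm).trans hD
  calc ‖φ.coeff m‖ * ‖∏ i ∈ m.support, z i ^ m i‖ ≤ ‖φ.coeff m‖ * M ^ D := by
        exact mul_le_mul_of_nonneg_left h1 (norm_nonneg _)
    _ = _ := rfl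

end aux

section basic

variable {p q : ℕ}

lemma ofV_toV (z : (Fin p ⊕ Fin q) → ℂ) : ofV (toV z) = z := by
  funext i
  cases i <;> simp [ofV, toV]

lemma toV_ofV (z : EuclideanSpace ℂ (Fin p) × EuclideanSpace ℂ (Fin q)) : toV (ofV z) = z := by
  simp [ofV, toV]

lemma toV_fst (z : (Fin p ⊕ Fin q) → ℂ) (i : Fin p) : (toV z).1 i = z (Sum.inl i) := rfl

lemma toV_snd (z : (Fin p ⊕ Fin q) → ℂ) (i : Fin q) : (toV z).2 i = z (Sum.inr i) := rfl

lemma euclid_coord_le {n : ℕ} (x : EuclideanSpace ℂ (Fin n)) (i : Fin n) : ‖x i‖ ≤ ‖x‖ := by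
  rw [EuclideanSpace.norm_eq]
  calc ‖x i‖ = Real.sqrt (‖x i‖ ^ 2) := (Real.sqrt_sq (norm_nonneg _)).symm
    _ ≤ _ := Real.sqrt_le_sqrt
        (Finset.single_le_sum (f := fun j => ‖x j‖ ^ 2) (fun _ _ => sq_nonneg _)
          (Finset.mem_univ i))

lemma norm_ofV_le (z : EuclideanSpace ℂ (Fin p) × EuclideanSpace ℂ (Fin q))
    (i : Fin p ⊕ Fin q) : ‖ofV z i‖ ≤ ‖z‖ := by
  cases i with
  | inl i => exact (euclid_coord_le z.1 i).trans (norm_fst_le z)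
  | inr i => exact (euclid_coord_le z.2 i).trans (norm_snd_le z)

lemma ofV_smul (c : ℂ) (z : EuclideanSpace ℂ (Fin p) × EuclideanSpace ℂ (Fin q)) :
    ofV (c • z) = c • ofV z := by
  funext i
  cases i <;> simp [ofV]

lemma differentiable_eval_poly (φ : MvPolynomial (Fin p ⊕ Fin q) ℂ) :
    Differentiable ℂ fun z : EuclideanSpace ℂ (Fin p) × EuclideanSpace ℂ (Fin q) =>
      eval (ofV z) (φ) := by
  have hcoord : ∀ i : Fin p ⊕ Fin q,
      Differentiable ℂ fun z : EuclideanSpace ℂ (Fin p) × EuclideanSpace ℂ (Fin q) =>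
        ofV z i := by
    intro i
    cases i with
    | inl i =>
        exact (EuclideanSpace.proj (𝕜 := ℂ) i).differentiable.comp differentiable_fst
    | inr i =>
        exact (EuclideanSpace.proj (𝕜 := ℂ) i).differentiable.comp differentiable_snd
  induction φ using MvPolynomial.induction_on with
  | C a => simpa using differentiable_const (α := ℂ) _
  | add f g hf hg => simp only [map_add]; exact hf.add hg
  | mul_X f i hf => simp only [map_mul, eval_X]; exact hf.mul (hcoord i)

lemma differentiable_polyMap (P : (Fin p ⊕ Fin q) → MvPolynomial (Fin p ⊕ Fin q) ℂ) :
    Differentiable ℂ (polyMap P) := by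
  have h1 : Differentiable ℂ fun z : EuclideanSpace ℂ (Fin p) × EuclideanSpace ℂ (Fin q) =>
      (polyMap P z).1 := by
    have : (fun z : EuclideanSpace ℂ (Fin p) × EuclideanSpace ℂ (Fin q) => (polyMap P z).1)
        = (PiLp.continuousLinearEquiv 2 ℂ (fun _ : Fin p => ℂ)).symm ∘
          fun z => fun i : Fin p => eval (ofV z) (P (Sum.inl i)) := rfl
    rw [this]
    exact ((PiLp.continuousLinearEquiv 2 ℂ (fun _ : Fin p => ℂ)).symm.differentiable).comp
      (differentiable_pi.mpr fun i => differentiable_eval_poly (P (Sum.inl i)))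
  have h2 : Differentiable ℂ fun z : EuclideanSpace ℂ (Fin p) × EuclideanSpace ℂ (Fin q) =>
      (polyMap P z).2 := by
    have : (fun z : EuclideanSpace ℂ (Fin p) × EuclideanSpace ℂ (Fin q) => (polyMap P z).2)
        = (PiLp.continuousLinearEquiv 2 ℂ (fun _ : Fin q => ℂ)).symm ∘
          fun z => fun i : Fin q => eval (ofV z) (P (Sum.inr i)) := rfl
    rw [this]
    exact ((PiLp.continuousLinearEquiv 2 ℂ (fun _ : Fin q => ℂ)).symm.differentiable).comp
      (differentiable_pi.mpr fun i => differentiable_eval_poly (P (Sum.inr i)))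
  exact h1.prodMk h2

end basic

section key

lemma remainder_totalDegree {σ : Type*} (φ : MvPolynomial σ ℂ) {d : ℕ}
    (h : φ.totalDegree ≤ d) : (φ - homogeneousComponent d φ).totalDegree ≤ d - 1 := by
  apply Finset.sup_le
  intro m hm
  have hcoeff : coeff m (φ - homogeneousComponent d φ) ≠ 0 := mem_support_iff.mp hm
  rw [coeff_sub, coeff_homogeneousComponent] at hcoeff
  by_cases hdm : Finsupp.degree m = d
  · simp [hdm] at hcoeff
  · simp only [hdm, if_neg, ite_false, sub_zero] at hcoeff
    have h1 : (m.sum fun _ e => e) ≤ d := le_trans (MvPolynomial.le_totalDegree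
      (mem_support_iff.mpr hcoeff)) h
    have h2 : (m.sum fun _ e => e) = Finsupp.degree m := rfl
    omega

lemma key_est {p q : ℕ} {ι : Type*} [Fintype ι] [Nonempty ι] {d : ℕ} (hd : 2 ≤ d)
    (F : ι → MvPolynomial (Fin p ⊕ Fin q) ℂ) (hdeg : ∀ j, (F j).totalDegree ≤ d)
    (N : (EuclideanSpace ℂ (Fin p) × EuclideanSpace ℂ (Fin q)) → ℝ)
    (hNcont : Continuous N) (hNle : ∀ v, N v ≤ ‖v‖)
    (hNsmul : ∀ (c : ℂ) v, N (c • v) = ‖c‖ * N v)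
    (hzero : ∀ v, (∀ j, eval (ofV v) (homogeneousComponent d (F j)) = 0) → N v = 0) :
    ∃ R₁ : ℝ, 2 ≤ R₁ ∧ ∀ R : ℝ, R₁ ≤ R → ∀ z, ‖z‖ < R → R / 2 ≤ N z →
      ∃ j, R < ‖eval (ofV z) (F j)‖ := by
  classical
  set H : ι → MvPolynomial (Fin p ⊕ Fin q) ℂ := fun j => homogeneousComponent d (F j) with hH
  set φ : EuclideanSpace ℂ (Fin p) × EuclideanSpace ℂ (Fin q) → ℝ := fun v => ∑ j, ‖eval (ofV v) (H j)‖ with hφ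
  have hφcont : Continuous φ := by
    apply continuous_finset_sum
    intro j _
    exact ((differentiable_eval_poly (H j)).continuous).norm
  set S : Set (EuclideanSpace ℂ (Fin p) × EuclideanSpace ℂ (Fin q)) := {v | ‖v‖ = 1 ∧ 1/2 ≤ N v} with hS
  have hScl : IsClosed S := by
    apply IsClosed.inter
    · exact isClosed_eq continuous_norm continuous_const
    · exact isClosed_le continuous_const hNcont
  have hScpt : IsCompact S := by
    have : S ⊆ Metric.sphere 0 1 := fun v hv => by
      simpa [Metric.mem_sphere, dist_zero_right] using hv.1
    exact (isCompact_sphere (0 : EuclideanSpace ℂ (Fin p) × EuclideanSpace ℂ (Fin q)) 1).of_isClosed_subset hScl this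
  have hpos : ∀ v ∈ S, 0 < φ v := by
    intro v hv
    rcases (Finset.sum_nonneg fun j _ => norm_nonneg _ : (0:ℝ) ≤ φ v).lt_or_eq with h | h
    · exact h
    · exfalso
      have hzero' : ∀ j, eval (ofV v) (H j) = 0 := by
        intro j
        have := (Finset.sum_eq_zero_iff_of_nonneg fun j _ => norm_nonneg
          (eval (ofV v) (H j))).mp h.symm j (Finset.mem_univ j)
        simpa using this
      have := hzero v hzero'
      have h12 := hv.2
      rw [this] at h12
      norm_num at h12
  obtain ⟨c', hc'pos, hc'⟩ : ∃ c' > 0, ∀ v ∈ S, c' ≤ φ v := by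
    rcases S.eq_empty_or_nonempty with h | h
    · exact ⟨1, one_pos, by simp [h]⟩
    · obtain ⟨v₀, hv₀S, hmin⟩ := hScpt.exists_isMinOn h hφcont.continuousOn
      exact ⟨φ v₀, hpos v₀ hv₀S, fun v hv => hmin hv⟩
  set n : ℕ := Fintype.card ι with hn
  have hnpos : 0 < (n:ℝ) := by
    have := Fintype.card_pos (α := ι); exact_mod_cast this
  set c : ℝ := c' / n with hc
  have hcpos : 0 < c := div_pos hc'pos hnpos
  set A : ℝ := ∑ j : ι, ∑ m ∈ (F j - H j).support, ‖coeff m (F j - H j)‖ with hA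
  have hAj : ∀ j : ι, (∑ m ∈ (F j - H j).support, ‖coeff m (F j - H j)‖) ≤ A :=
    fun j => Finset.single_le_sum (f := fun j => ∑ m ∈ (F j - H j).support,
      ‖coeff m (F j - H j)‖) (fun i _ => Finset.sum_nonneg fun m _ => norm_nonneg _)
      (Finset.mem_univ j)
  have hA0 : 0 ≤ A := Finset.sum_nonneg fun j _ => Finset.sum_nonneg fun m _ => norm_nonneg _
  refine ⟨max 2 (2 * (A + 4) / c), le_max_left _ _, ?_⟩
  intro R hR z hzR hNz
  set s : ℝ := ‖z‖ with hs
  have hR2 : 2 ≤ R := le_trans (le_max_left _ _) hR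
  have hsR2 : R / 2 ≤ s := le_trans hNz (hNle z)
  have hs1 : 1 ≤ s := by linarith
  have hs0 : 0 < s := by linarith
  have hz0 : z ≠ 0 := by
    intro h; rw [h] at hs; simp at hs; rw [hs] at hs0; norm_num at hs0
  -- rescale
  set v : EuclideanSpace ℂ (Fin p) × EuclideanSpace ℂ (Fin q) := ((s:ℂ))⁻¹ • z with hv
  have hnorms : ‖((s:ℂ))⁻¹‖ = s⁻¹ := by
    rw [norm_inv, Complex.norm_real, Real.norm_eq_abs, abs_of_pos hs0]
  have hvnorm : ‖v‖ = 1 := by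
    rw [hv, norm_smul, hnorms, ← hs, inv_mul_cancel₀ (ne_of_gt hs0)]
  have hvN : 1/2 ≤ N v := by
    rw [hv, hNsmul, hnorms]
    have : s / 2 ≤ N z := by
      calc s / 2 ≤ R / 2 := by linarith
        _ ≤ N z := hNz
    calc (1:ℝ)/2 = s⁻¹ * (s/2) := by field_simp
      _ ≤ s⁻¹ * N z := by
          apply mul_le_mul_of_nonneg_left this (le_of_lt (inv_pos.mpr hs0))
  have hvS : v ∈ S := ⟨hvnorm, hvN⟩
  -- pick maximizing index
  obtain ⟨j, -, hj⟩ := Finset.exists_max_image Finset.univ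
    (fun j => ‖eval (ofV v) (H j)‖) ⟨Classical.arbitrary ι, Finset.mem_univ _⟩
  have hmax : c ≤ ‖eval (ofV v) (H j)‖ := by
    have hsum : φ v ≤ (n:ℝ) * ‖eval (ofV v) (H j)‖ := by
      rw [hφ]
      calc ∑ i : ι, ‖eval (ofV v) (H i)‖ ≤ ∑ _i : ι, ‖eval (ofV v) (H j)‖ :=
            Finset.sum_le_sum fun i _ => hj i (Finset.mem_univ i)
        _ = (n:ℝ) * ‖eval (ofV v) (H j)‖ := by
            rw [Finset.sum_const, Finset.card_univ, nsmul_eq_mul]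
    have := le_trans (hc' v hvS) hsum
    rw [hc]
    rw [div_le_iff₀ hnpos]
    linarith [this]
  -- homogeneity
  have hzv : z = (s:ℂ) • v := by
    rw [hv, smul_smul, mul_inv_cancel₀ (by exact_mod_cast ne_of_gt hs0), one_smul]
  have hHj : ‖eval (ofV z) (H j)‖ = s ^ d * ‖eval (ofV v) (H j)‖ := by
    conv_lhs => rw [hzv, ofV_smul]
    rw [eval_smul_of_isHomogeneous (H j) (homogeneousComponent_isHomogeneous d (F j)) _ _]
    rw [norm_mul, norm_pow, Complex.norm_real, Real.norm_eq_abs, abs_of_pos hs0]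
  have hHjlow : c * s ^ d ≤ ‖eval (ofV z) (H j)‖ := by
    rw [hHj, mul_comm]
    exact mul_le_mul_of_nonneg_left hmax (pow_nonneg (le_of_lt hs0) d)
  -- remainder
  have hrem : ‖eval (ofV z) (F j - H j)‖ ≤ A * s ^ (d - 1) := by
    calc ‖eval (ofV z) (F j - H j)‖
        ≤ (∑ m ∈ (F j - H j).support, ‖coeff m (F j - H j)‖) * s ^ (d-1) :=
          norm_eval_le _ _ s hs1 (fun i => norm_ofV_le z i) (remainder_totalDegree _ (hdeg j))
      _ ≤ A * s ^ (d-1) := by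
          apply mul_le_mul_of_nonneg_right (hAj j) (pow_nonneg (le_of_lt hs0) _)
  refine ⟨j, ?_⟩
  have hFj : c * s ^ d - A * s ^ (d-1) ≤ ‖eval (ofV z) (F j)‖ := by
    have h1 : eval (ofV z) (F j - H j) = eval (ofV z) (F j) - eval (ofV z) (H j) := by
      simp [map_sub]
    have h2 := norm_sub_norm_le (eval (ofV z) (H j)) (eval (ofV z) (F j))
    rw [norm_sub_rev] at h2
    rw [h1] at hrem
    linarith
  -- arithmetic
  have hsd : s ^ d = s ^ (d-1) * s := by
    rw [← pow_succ]
    congr 1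
    omega
  have hx1 : R / 2 ≤ s ^ (d-1) := le_trans hsR2 (le_self_pow₀ hs1 (by omega))
  have hx2 : (4:ℝ) ≤ c * s - A := by
    have hRc : 2 * (A + 4) / c ≤ R := le_trans (le_max_right _ _) hR
    have : 2 * (A + 4) ≤ c * R := by
      rw [div_le_iff₀ hcpos] at hRc
      linarith
    have hcs : c * (R/2) ≤ c * s := mul_le_mul_of_nonneg_left hsR2 (le_of_lt hcpos)
    linarith
  have hprod : (R/2) * 4 ≤ s ^ (d-1) * (c * s - A) :=
    mul_le_mul hx1 hx2 (by norm_num) (le_trans (by linarith) hx1)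
  have : c * s ^ d - A * s ^ (d-1) = s ^ (d-1) * (c * s - A) := by
    rw [hsd]; ring
  linarith

end key

/-- **Regular polynomial automorphisms restricted to a large bidisc are horizontal-like.**
If `f` is a polynomial automorphism of `ℂ^k` with polynomial inverse `g`, with
`deg f_j ≤ d`, the degree-`d` homogeneous parts of `f₁,…,f_p` having no common zero outside
`{z' = 0}`, and the symmetric conditions for `g` with degree `e` and `{z'' = 0}`, then for `R`
large, with `D = B_p^R × B_{k−p}^R` and `U = D ∩ f⁻¹(D)`, one has
`U ⊆ B_p^{R/2} × B_{k−p}^R`, `f(U) ⊆ B_p^R × B_{k−p}^{R/2}`; in particular, if `U ≠ ∅` then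
`f : U → f(U)` is an invertible horizontal-like map on `D`. -/
theorem stmt_15 (k p d e : ℕ) (hp : 1 ≤ p) (hpk : p + 1 ≤ k) (hd : 2 ≤ d) (he : 2 ≤ e)
    (P Q : (Fin p ⊕ Fin (k - p)) → MvPolynomial (Fin p ⊕ Fin (k - p)) ℂ)
    (hinv₁ : ∀ z : (Fin p ⊕ Fin (k - p)) → ℂ, ∀ j,
      eval (fun i => eval z (P i)) (Q j) = z j)
    (hinv₂ : ∀ z : (Fin p ⊕ Fin (k - p)) → ℂ, ∀ j,
      eval (fun i => eval z (Q i)) (P j) = z j)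
    (hPdeg : ∀ j, (P j).totalDegree ≤ d)
    (hQdeg : ∀ j, (Q j).totalDegree ≤ e)
    (hPzero : ∀ z : (Fin p ⊕ Fin (k - p)) → ℂ,
      (∀ j : Fin p, eval z (homogeneousComponent d (P (Sum.inl j))) = 0) →
      ∀ i : Fin p, z (Sum.inl i) = 0)
    (hQzero : ∀ z : (Fin p ⊕ Fin (k - p)) → ℂ,
      (∀ j : Fin (k - p), eval z (homogeneousComponent e (Q (Sum.inr j))) = 0) →
      ∀ i : Fin (k - p), z (Sum.inr i) = 0) :
    ∃ R₀ > 0, ∀ R : ℝ, R₀ ≤ R →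
      {z ∈ Metric.ball (0 : EuclideanSpace ℂ (Fin p)) R ×ˢ
          Metric.ball (0 : EuclideanSpace ℂ (Fin (k - p))) R |
        polyMap P z ∈ Metric.ball (0 : EuclideanSpace ℂ (Fin p)) R ×ˢ
          Metric.ball (0 : EuclideanSpace ℂ (Fin (k - p))) R} ⊆
        Metric.ball 0 (R / 2) ×ˢ Metric.ball 0 R ∧
      polyMap P '' {z ∈ Metric.ball (0 : EuclideanSpace ℂ (Fin p)) R ×ˢ
          Metric.ball (0 : EuclideanSpace ℂ (Fin (k - p))) R |
        polyMap P z ∈ Metric.ball (0 : EuclideanSpace ℂ (Fin p)) R ×ˢ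
          Metric.ball (0 : EuclideanSpace ℂ (Fin (k - p))) R} ⊆
        Metric.ball 0 R ×ˢ Metric.ball 0 (R / 2) ∧
      ({z ∈ Metric.ball (0 : EuclideanSpace ℂ (Fin p)) R ×ˢ
          Metric.ball (0 : EuclideanSpace ℂ (Fin (k - p))) R |
        polyMap P z ∈ Metric.ball (0 : EuclideanSpace ℂ (Fin p)) R ×ˢ
          Metric.ball (0 : EuclideanSpace ℂ (Fin (k - p))) R}.Nonempty →
        InvHorizLike (Metric.ball 0 R) (Metric.ball 0 R) (polyMap P)
          {z ∈ Metric.ball (0 : EuclideanSpace ℂ (Fin p)) R ×ˢ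
              Metric.ball (0 : EuclideanSpace ℂ (Fin (k - p))) R |
            polyMap P z ∈ Metric.ball (0 : EuclideanSpace ℂ (Fin p)) R ×ˢ
              Metric.ball (0 : EuclideanSpace ℂ (Fin (k - p))) R}
          (polyMap P '' {z ∈ Metric.ball (0 : EuclideanSpace ℂ (Fin p)) R ×ˢ
              Metric.ball (0 : EuclideanSpace ℂ (Fin (k - p))) R |
            polyMap P z ∈ Metric.ball (0 : EuclideanSpace ℂ (Fin p)) R ×ˢ
              Metric.ball (0 : EuclideanSpace ℂ (Fin (k - p))) R})) := by
  classical
  haveI : Nonempty (Fin p) := ⟨⟨0, by omega⟩⟩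
  haveI : Nonempty (Fin (k - p)) := ⟨⟨0, by omega⟩⟩
  -- the two key estimates
  obtain ⟨R₁, hR₁2, hkey₁⟩ := key_est (p := p) (q := k - p) hd (fun j => P (Sum.inl j))
    (fun j => hPdeg _) (fun v => ‖v.1‖) (continuous_fst.norm) (fun v => norm_fst_le v)
    (fun c v => by show ‖(c • v).1‖ = ‖c‖ * ‖v.1‖; rw [Prod.smul_fst, norm_smul])
    (by
      intro v hv
      have h0 := hPzero (ofV v) hv
      show ‖v.1‖ = 0
      have : v.1 = 0 := by
        ext i
        exact h0 i
      rw [this, norm_zero])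
  obtain ⟨R₂, hR₂2, hkey₂⟩ := key_est (p := p) (q := k - p) he (fun j => Q (Sum.inr j))
    (fun j => hQdeg _) (fun v => ‖v.2‖) (continuous_snd.norm) (fun v => norm_snd_le v)
    (fun c v => by show ‖(c • v).2‖ = ‖c‖ * ‖v.2‖; rw [Prod.smul_snd, norm_smul])
    (by
      intro v hv
      have h0 := hQzero (ofV v) hv
      show ‖v.2‖ = 0
      have : v.2 = 0 := by
        ext i
        exact h0 i
      rw [this, norm_zero])
  refine ⟨max R₁ R₂, by positivity <;> linarith, ?_⟩
  intro R hR
  have hRR₁ : R₁ ≤ R := le_trans (le_max_left _ _) hR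
  have hRR₂ : R₂ ≤ R := le_trans (le_max_right _ _) hR
  have hR2 : 2 ≤ R := le_trans hR₁2 hRR₁
  have hR0 : 0 < R := by linarith
  set D := Metric.ball (0 : EuclideanSpace ℂ (Fin p)) R ×ˢ
      Metric.ball (0 : EuclideanSpace ℂ (Fin (k - p))) R with hD
  set U := {z ∈ D | polyMap P z ∈ D} with hU
  have memD : ∀ z : EuclideanSpace ℂ (Fin p) × EuclideanSpace ℂ (Fin (k - p)),
      z ∈ D ↔ ‖z.1‖ < R ∧ ‖z.2‖ < R := by
    intro z
    simp [hD, Set.mem_prod, mem_ball_zero_iff]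
  have normD : ∀ z : EuclideanSpace ℂ (Fin p) × EuclideanSpace ℂ (Fin (k - p)),
      z ∈ D → ‖z‖ < R := by
    intro z hz
    rw [memD] at hz
    rw [Prod.norm_def]
    exact max_lt hz.1 hz.2
  -- inversion identities
  have hofVP : ∀ z, ofV (polyMap P z) = fun i => eval (ofV z) (P i) := by
    intro z
    rw [polyMap, ofV_toV]
  have hofVQ : ∀ z, ofV (polyMap Q z) = fun i => eval (ofV z) (Q i) := by
    intro z
    rw [polyMap, ofV_toV]
  have hgf : ∀ z, polyMap Q (polyMap P z) = z := by
    intro z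
    rw [polyMap, hofVP]
    have : (fun j => eval (fun i => eval (ofV z) (P i)) (Q j)) = ofV z := by
      funext j
      exact hinv₁ (ofV z) j
    rw [this, toV_ofV]
  have hfg : ∀ z, polyMap P (polyMap Q z) = z := by
    intro z
    rw [polyMap, hofVQ]
    have : (fun j => eval (fun i => eval (ofV z) (Q i)) (P j)) = ofV z := by
      funext j
      exact hinv₂ (ofV z) j
    rw [this, toV_ofV]
  -- Claim 1
  have claim1 : ∀ z ∈ U, ‖z.1‖ < R / 2 := by
    intro z hz
    by_contra hcon
    push_neg at hcon
    obtain ⟨j, hj⟩ := hkey₁ R hRR₁ z (normD z hz.1) hcon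
    have h1 : ‖(polyMap P z).1 j‖ ≤ ‖(polyMap P z).1‖ := euclid_coord_le _ j
    have h2 : ‖(polyMap P z).1‖ < R := ((memD _).mp hz.2).1
    have h3 : (polyMap P z).1 j = eval (ofV z) (P (Sum.inl j)) := rfl
    rw [h3] at h1
    linarith
  -- Claim 2
  have claim2 : ∀ z ∈ U, ‖(polyMap P z).2‖ < R / 2 := by
    intro z hz
    by_contra hcon
    push_neg at hcon
    obtain ⟨j, hj⟩ := hkey₂ R hRR₂ (polyMap P z) (normD _ hz.2) hcon
    have h4 : eval (ofV (polyMap P z)) (Q (Sum.inr j)) = ofV z (Sum.inr j) := by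
      rw [hofVP]
      exact hinv₁ (ofV z) (Sum.inr j)
    rw [h4] at hj
    have h5 : ‖ofV z (Sum.inr j)‖ ≤ ‖z.2‖ := euclid_coord_le z.2 j
    have h6 : ‖z.2‖ < R := ((memD _).mp hz.1).2
    linarith
  have hUsub : U ⊆ Metric.ball 0 (R / 2) ×ˢ Metric.ball 0 R := by
    intro z hz
    refine ⟨?_, ?_⟩
    · rw [mem_ball_zero_iff]
      exact claim1 z hz
    · rw [mem_ball_zero_iff]
      exact ((memD _).mp hz.1).2
  have hVsub : polyMap P '' U ⊆ Metric.ball 0 R ×ˢ Metric.ball 0 (R / 2) := by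
    rintro w ⟨z, hz, rfl⟩
    refine ⟨?_, ?_⟩
    · rw [mem_ball_zero_iff]
      exact ((memD _).mp hz.2).1
    · rw [mem_ball_zero_iff]
      exact claim2 z hz
  refine ⟨hUsub, hVsub, ?_⟩
  intro hUne
  have hfc : Continuous (polyMap P) := (differentiable_polyMap P).continuous
  have hgc : Continuous (polyMap Q) := (differentiable_polyMap Q).continuous
  have hDopen : IsOpen D := (Metric.isOpen_ball).prod Metric.isOpen_ball
  have hUeq : U = D ∩ (polyMap P) ⁻¹' D := by
    ext z
    simp [hU, Set.mem_sep_iff]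
  have hUopen : IsOpen U := by
    rw [hUeq]
    exact hDopen.inter (hDopen.preimage hfc)
  have hVeq : polyMap P '' U = D ∩ (polyMap Q) ⁻¹' D := by
    apply Set.Subset.antisymm
    · rintro w ⟨z, hz, rfl⟩
      exact ⟨hz.2, by rw [Set.mem_preimage, hgf]; exact hz.1⟩
    · rintro w ⟨hw1, hw2⟩
      exact ⟨polyMap Q w, ⟨hw2, by rw [hfg]; exact hw1⟩, hfg w⟩
  have hVopen : IsOpen (polyMap P '' U) := by
    rw [hVeq]
    exact hDopen.inter (hDopen.preimage hgc)
  refine ⟨hUopen, hVopen, hUne, hUne.image _, fun z hz => hz.1, ?_, ?_, ?_, rfl, ?_, ?_⟩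
  · rintro w ⟨z, hz, rfl⟩
    exact hz.2
  · exact (differentiable_polyMap P).differentiableOn
  · intro a _ b _ hab
    have := congrArg (polyMap Q) hab
    rwa [hgf, hgf] at this
  · -- closed graph
    rintro x ⟨hxcl, hxD⟩
    have hgraph : x.2 = polyMap P x.1 := by
      have hGc : IsClosed {y : (EuclideanSpace ℂ (Fin p) × EuclideanSpace ℂ (Fin (k - p))) ×
          (EuclideanSpace ℂ (Fin p) × EuclideanSpace ℂ (Fin (k - p))) |
          y.2 = polyMap P y.1} := isClosed_eq continuous_snd (hfc.comp continuous_fst)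
      have hsub : (fun z => (z, polyMap P z)) '' U ⊆
          {y | y.2 = polyMap P y.1} := by
        rintro y ⟨z, _, rfl⟩
        rfl
      exact closure_minimal hsub hGc hxcl
    have hx1U : x.1 ∈ U := ⟨hxD.1, by rw [← hgraph]; exact hxD.2⟩
    exact ⟨x.1, hx1U, by
      show (x.1, polyMap P x.1) = x
      rw [← hgraph]⟩
  · refine ⟨Metric.ball 0 (R / 2), Metric.ball 0 (R / 2), Metric.isOpen_ball,
      Metric.isOpen_ball, ?_, ?_, ?_, ?_, hUsub, hVsub⟩
    · rw [closure_ball (0 : EuclideanSpace ℂ (Fin p)) (by positivity : (R:ℝ)/2 ≠ 0)]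
      exact isCompact_closedBall _ _
    · rw [closure_ball (0 : EuclideanSpace ℂ (Fin p)) (by positivity : (R:ℝ)/2 ≠ 0)]
      exact Metric.closedBall_subset_ball (by linarith)
    · rw [closure_ball (0 : EuclideanSpace ℂ (Fin (k - p))) (by positivity : (R:ℝ)/2 ≠ 0)]
      exact isCompact_closedBall _ _
    · rw [closure_ball (0 : EuclideanSpace ℂ (Fin (k - p))) (by positivity : (R:ℝ)/2 ≠ 0)]
      exact Metric.closedBall_subset_ball (by linarith)
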